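/- Let n be a positive integer and let k be an integer with 0 ≤ k ≤ n−1. Let Ξₖⁿ := {x ∈ Iⁿ : k ≤ Σ_{i=1}^n xᵢ ≤ k+1} be the slab of the unit hypercube between the hyperplanes Σᵢxᵢ = k and Σᵢxᵢ = k+1. Then vol_n(Ξₖⁿ) = A(n,k)/n!, where A(n,k) is the Eulerian number counting permutations of {1,…,n} with exactly k ascents. -/

import Mathlib

open MeasureTheory Finset
open scoped ENNReal

/-- The Eulerian number `A(n,k)`: the number of permutations `σ` of `Fin n` having exactly
`k` ascents, i.e. exactly `k` positions `i` followed by a position `j` (so `j = i + 1`)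
with `σ i < σ j`. -/
def eulerianNumber (n k : ℕ) : ℕ :=
  ((Finset.univ : Finset (Equiv.Perm (Fin n))).filter (fun σ =>
    ((Finset.univ : Finset (Fin n)).filter
      (fun i : Fin n => ∃ j : Fin n, (j : ℕ) = (i : ℕ) + 1 ∧ σ i < σ j)).card = k)).card

namespace EulerSlab

variable {n : ℕ}

/-- ascent positions of a permutation -/
def ascSet (w : Equiv.Perm (Fin n)) : Finset (Fin n) :=
  (Finset.univ : Finset (Fin n)).filter
    (fun i : Fin n => ∃ j : Fin n, (j : ℕ) = (i : ℕ) + 1 ∧ w i < w j)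

lemma mem_ascSet {w : Equiv.Perm (Fin n)} {i : Fin n} :
    i ∈ ascSet w ↔ ∃ j : Fin n, (j : ℕ) = (i : ℕ) + 1 ∧ w i < w j := by
  simp [ascSet]

lemma mem_ascSet_iff {w : Equiv.Perm (Fin n)} {i j : Fin n} (hj : (j : ℕ) = (i : ℕ) + 1) :
    i ∈ ascSet w ↔ w i < w j := by
  rw [mem_ascSet]
  constructor
  · rintro ⟨j', hj', h⟩
    have : j' = j := Fin.ext (by omega)
    rwa [this] at h
  · exact fun h => ⟨j, hj, h⟩

lemma ascSet_lt {w : Equiv.Perm (Fin n)} {i : Fin n} (hi : i ∈ ascSet w) :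
    (i : ℕ) + 1 < n := by
  rw [mem_ascSet] at hi
  obtain ⟨j, hj, -⟩ := hi
  omega

/-- number of ascents strictly before position `m` -/
def mcount (w : Equiv.Perm (Fin n)) (m : ℕ) : ℕ :=
  ((ascSet w).filter (fun a : Fin n => a.1 < m)).card

lemma mcount_zero (w : Equiv.Perm (Fin n)) : mcount w 0 = 0 := by
  simp [mcount]

lemma mcount_succ (w : Equiv.Perm (Fin n)) (m : ℕ) (hm : m < n) :
    mcount w (m + 1) = mcount w m + (if (⟨m, hm⟩ : Fin n) ∈ ascSet w then 1 else 0) := by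
  classical
  unfold mcount
  have h1 : ((ascSet w).filter (fun a : Fin n => a.1 < m + 1)) =
      ((ascSet w).filter (fun a : Fin n => a.1 < m)) ∪
      ((ascSet w).filter (fun a : Fin n => a.1 = m)) := by
    rw [← Finset.filter_or]
    apply Finset.filter_congr
    intro a _
    constructor
    · intro h; omega
    · intro h; omega
  rw [h1, Finset.card_union_of_disjoint]
  · congr 1
    by_cases h : (⟨m, hm⟩ : Fin n) ∈ ascSet w
    · rw [if_pos h]
      rw [Finset.card_eq_one]
      refine ⟨⟨m, hm⟩, ?_⟩
      ext a
      simp only [Finset.mem_filter, Finset.mem_singleton]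
      constructor
      · rintro ⟨-, ha⟩; exact Fin.ext ha
      · rintro rfl; exact ⟨h, rfl⟩
    · rw [if_neg h]
      rw [Finset.card_eq_zero, Finset.filter_eq_empty_iff]
      intro a ha hav
      exact h (by rwa [show (⟨m, hm⟩ : Fin n) = a from Fin.ext hav.symm])
  · rw [Finset.disjoint_filter]
    intro a _ h1 h2
    omega

lemma mcount_last (w : Equiv.Perm (Fin n)) : mcount w (n - 1) = (ascSet w).card := by
  unfold mcount
  congr 1
  rw [Finset.filter_eq_self]
  intro a ha
  have := ascSet_lt ha
  omega

lemma mcount_le_succ (w : Equiv.Perm (Fin n)) (m : ℕ) : mcount w m ≤ mcount w (m+1) := by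
  apply Finset.card_le_card
  intro a ha
  simp only [Finset.mem_filter] at ha ⊢
  exact ⟨ha.1, by omega⟩

/-- partial sums -/
def psum (x : Fin n → ℝ) (i : Fin n) : ℝ := ∑ j ∈ Finset.Iic i, x j

lemma psum_zero (hn : 0 < n) (x : Fin n → ℝ) : psum x ⟨0, hn⟩ = x ⟨0, hn⟩ := by
  unfold psum
  rw [show Finset.Iic (⟨0, hn⟩ : Fin n) = {⟨0, hn⟩} from ?_, Finset.sum_singleton]
  ext a
  simp only [Finset.mem_Iic, Finset.mem_singleton, Fin.le_def, Fin.ext_iff]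
  omega

lemma psum_succ (x : Fin n → ℝ) (m : ℕ) (hm : m + 1 < n) :
    psum x ⟨m + 1, hm⟩ = psum x ⟨m, by omega⟩ + x ⟨m + 1, hm⟩ := by
  unfold psum
  rw [show Finset.Iic (⟨m+1, hm⟩ : Fin n) = insert ⟨m+1, hm⟩ (Finset.Iic ⟨m, by omega⟩) from ?_,
    Finset.sum_insert (by simp [Fin.le_def]), add_comm]
  ext a
  simp only [Finset.mem_Iic, Finset.mem_insert, Fin.le_def, Fin.ext_iff]
  omega


/-- the affine "fractional part of partial sums, reflected" map -/
noncomputable def phi (w : Equiv.Perm (Fin n)) (x : Fin n → ℝ) : Fin n → ℝ :=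
  fun i => (mcount w i.1 : ℝ) + 1 - psum x i

/-- the open "order pattern" region of a permutation -/
def D (w : Equiv.Perm (Fin n)) : Set (Fin n → ℝ) :=
  {z | (∀ i, z i ∈ Set.Ioo (0:ℝ) 1) ∧ ∀ i j, w i < w j → z i < z j}

def piece (w : Equiv.Perm (Fin n)) : Set (Fin n → ℝ) := phi w ⁻¹' D w

lemma measurableSet_D (w : Equiv.Perm (Fin n)) : MeasurableSet (D w) := by
  have : D w = (⋂ i, {z : Fin n → ℝ | 0 < z i} ∩ {z | z i < 1}) ∩
      ⋂ i, ⋂ j, {z : Fin n → ℝ | w i < w j → z i < z j} := by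
    ext z
    simp only [D, Set.mem_setOf_eq, Set.mem_inter_iff, Set.mem_iInter, Set.mem_Ioo]
  rw [this]
  apply MeasurableSet.inter
  · exact MeasurableSet.iInter fun i => ((measurableSet_lt measurable_const
      (measurable_pi_apply i)).inter (measurableSet_lt (measurable_pi_apply i) measurable_const))
  · refine MeasurableSet.iInter fun i => MeasurableSet.iInter fun j => ?_
    by_cases h : w i < w j
    · simp only [h, forall_true_left]
      exact measurableSet_lt (measurable_pi_apply i) (measurable_pi_apply j)
    · have : {z : Fin n → ℝ | w i < w j → z i < z j} = Set.univ := by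
        ext z; simp [h]
      rw [this]; exact MeasurableSet.univ

lemma strictMono_perm_eq_one (u : Equiv.Perm (Fin n)) (hu : StrictMono (u : Fin n → Fin n)) :
    u = 1 := by
  have h := Subsingleton.elim (StrictMono.orderIsoOfSurjective (u : Fin n → Fin n) hu u.surjective)
    (OrderIso.refl (Fin n))
  refine Equiv.ext fun i => ?_
  have := congrArg (fun (f : Fin n ≃o Fin n) => f i) h
  simpa [StrictMono.coe_orderIsoOfSurjective] using this

lemma D_disjoint {w w' : Equiv.Perm (Fin n)} (h : w ≠ w') : Disjoint (D w) (D w') := by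
  rw [Set.disjoint_left]
  rintro z ⟨-, hz⟩ ⟨-, hz'⟩
  apply h
  have key : ∀ i j, w i < w j → w' i < w' j := by
    intro i j hij
    rcases lt_trichotomy (w' i) (w' j) with h1 | h1 | h1
    · exact h1
    · exact absurd (w'.injective h1) (by rintro rfl; exact lt_irrefl _ hij)
    · exact absurd (hz' _ _ h1) (not_lt.2 (le_of_lt (hz _ _ hij)))
  -- u = w' * w⁻¹ is strictly monotone
  have hu : StrictMono ((w' * w⁻¹ : Equiv.Perm (Fin n)) : Fin n → Fin n) := by
    intro a b hab
    have : w (w⁻¹ a) < w (w⁻¹ b) := by simpa using hab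
    simpa using key _ _ this
  have hw : w' * w⁻¹ = 1 := strictMono_perm_eq_one _ hu
  refine Equiv.ext fun i => ?_
  have := congrArg (fun (v : Equiv.Perm (Fin n)) => v (w i)) hw
  simpa using this.symm

lemma volume_D_eq (w : Equiv.Perm (Fin n)) :
    volume (D w) = volume (D (1 : Equiv.Perm (Fin n))) := by
  have hDw : D w =
      (MeasurableEquiv.piCongrLeft (fun _ : Fin n => ℝ) (w : Fin n ≃ Fin n)) ⁻¹'
        (D (1 : Equiv.Perm (Fin n))) := by
    ext z
    have happ : (MeasurableEquiv.piCongrLeft (fun _ : Fin n => ℝ) (w : Fin n ≃ Fin n)) z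
        = z ∘ w.symm := by
      ext b
      simp [MeasurableEquiv.piCongrLeft, Equiv.piCongrLeft_apply, Equiv.piCongrLeft']
    simp only [Set.mem_preimage, happ, D, Set.mem_setOf_eq, Function.comp_apply,
      Equiv.Perm.coe_one, id_eq]
    constructor
    · rintro ⟨h1, h2⟩
      refine ⟨fun i => h1 (w.symm i), fun i j hij => h2 _ _ ?_⟩
      simpa using hij
    · rintro ⟨h1, h2⟩
      refine ⟨fun i => by simpa using h1 (w i), fun i j hij => ?_⟩
      have := h2 (w i) (w j) hij
      simpa using this
  rw [hDw]
  exact (volume_measurePreserving_piCongrLeft (fun _ : Fin n => ℝ)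
    (w : Fin n ≃ Fin n)).measure_preimage
    (measurableSet_D (1 : Equiv.Perm (Fin n))).nullMeasurableSet


lemma hyperplane_null (f : (Fin n → ℝ) →ₗ[ℝ] ℝ) (v : Fin n → ℝ) (hv : f v ≠ 0) (q : ℝ) :
    volume {x : Fin n → ℝ | f x = q} = 0 := by
  set p : Fin n → ℝ := (q / f v) • v with hp
  have hfp : f p = q := by
    rw [hp, LinearMap.map_smul, smul_eq_mul, div_mul_cancel₀ _ hv]
  set S : AffineSubspace ℝ (Fin n → ℝ) := AffineSubspace.mk' p (LinearMap.ker f) with hS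
  have hset : {x : Fin n → ℝ | f x = q} = (S : Set (Fin n → ℝ)) := by
    ext x
    simp only [Set.mem_setOf_eq, hS, SetLike.mem_coe, AffineSubspace.mem_mk',
      vsub_eq_sub, LinearMap.mem_ker, map_sub, hfp, sub_eq_zero]
  have hne : S ≠ ⊤ := by
    intro h
    have : p + (1 / f v) • v ∈ S := by rw [h]; trivial
    rw [hS, AffineSubspace.mem_mk'] at this
    simp only [vsub_eq_sub, add_sub_cancel_left, LinearMap.mem_ker, LinearMap.map_smul,
      smul_eq_mul, one_div] at this
    rw [inv_mul_eq_div, div_eq_zero_iff] at this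
    exact hv (this.resolve_right hv)
  rw [hset]
  exact Measure.addHaar_affineSubspace volume S hne

lemma diag_null (i j : Fin n) (hij : i ≠ j) : volume {z : Fin n → ℝ | z i = z j} = 0 := by
  classical
  have := hyperplane_null (f := LinearMap.proj (R := ℝ) (φ := fun _ : Fin n => ℝ) i -
      LinearMap.proj j) (Pi.single i 1) ?_ 0
  · convert this using 2
    ext z
    simp [sub_eq_zero]
  · simp [Pi.single_eq_same, Pi.single_eq_of_ne (Ne.symm hij)]

lemma volume_D_val (hn : 0 < n) (w : Equiv.Perm (Fin n)) :
    volume (D w) = ((n.factorial : ℝ≥0∞))⁻¹ := by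
  classical
  -- the union of all D's fills the open cube up to a null set
  set C : Set (Fin n → ℝ) := Set.pi Set.univ (fun _ => Set.Ioo (0:ℝ) 1) with hC
  have hCvol : volume C = 1 := by
    rw [hC, volume_pi_pi]
    simp [Real.volume_Ioo]
  have hsub : ∀ w' : Equiv.Perm (Fin n), D w' ⊆ C := by
    rintro w' z ⟨h1, -⟩ i -
    exact h1 i
  have hcover : C ⊆ (⋃ w' : Equiv.Perm (Fin n), D w') ∪
      ⋃ (p : Fin n × Fin n) (_ : p.1 ≠ p.2), {z : Fin n → ℝ | z p.1 = z p.2} := by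
    intro z hz
    by_cases hinj : Function.Injective z
    · left
      set σ := Tuple.sort z with hσ
      have hmono : StrictMono (z ∘ σ) :=
        (Tuple.monotone_sort z).strictMono_of_injective (hinj.comp σ.injective)
      refine Set.mem_iUnion.2 ⟨σ⁻¹, ⟨fun i => hz i trivial, fun i j hij => ?_⟩⟩
      have := hmono hij
      simpa using this
    · right
      simp only [Function.Injective, not_forall] at hinj
      obtain ⟨a, b, hab, hne⟩ := hinj
      exact Set.mem_iUnion.2 ⟨(a, b), Set.mem_iUnion.2 ⟨hne, hab⟩⟩
  have hnull : volume (⋃ (p : Fin n × Fin n) (_ : p.1 ≠ p.2),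
      {z : Fin n → ℝ | z p.1 = z p.2}) = 0 := by
    refine measure_iUnion_null fun p => ?_
    by_cases hp : p.1 ≠ p.2
    · refine measure_iUnion_null fun _ => diag_null _ _ hp
    · simp [hp]
  -- sum of volumes
  have hdisj : ((Finset.univ : Finset (Equiv.Perm (Fin n))) : Set (Equiv.Perm (Fin n))).PairwiseDisjoint D :=
    fun a _ b _ hab => D_disjoint hab
  have hsum : volume (⋃ w' ∈ (Finset.univ : Finset (Equiv.Perm (Fin n))), D w') =
      ∑ w' : Equiv.Perm (Fin n), volume (D w') :=
    measure_biUnion_finset hdisj fun w' _ => measurableSet_D w'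
  have hUeq : (⋃ w' : Equiv.Perm (Fin n), D w') =
      ⋃ w' ∈ (Finset.univ : Finset (Equiv.Perm (Fin n))), D w' := by simp
  have hconst : ∀ w' : Equiv.Perm (Fin n), volume (D w') = volume (D w) := by
    intro w'; rw [volume_D_eq w', volume_D_eq w]
  have htot : (Fintype.card (Equiv.Perm (Fin n)) : ℝ≥0∞) * volume (D w) = 1 := by
    have h1 : volume (⋃ w' : Equiv.Perm (Fin n), D w') = 1 := by
      apply le_antisymm
      · calc volume (⋃ w' : Equiv.Perm (Fin n), D w') ≤ volume C :=
              measure_mono (Set.iUnion_subset hsub)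
          _ = 1 := hCvol
      · calc (1 : ℝ≥0∞) = volume C := hCvol.symm
          _ ≤ volume ((⋃ w' : Equiv.Perm (Fin n), D w') ∪ _) := measure_mono hcover
          _ ≤ volume (⋃ w' : Equiv.Perm (Fin n), D w') + _ := measure_union_le _ _
          _ = volume (⋃ w' : Equiv.Perm (Fin n), D w') + 0 := by rw [hnull]
          _ = _ := add_zero _
    rw [← h1, hUeq, hsum]
    simp only [hconst]
    rw [Finset.sum_const, Finset.card_univ, nsmul_eq_mul]
  rw [Fintype.card_perm, Fintype.card_fin] at htot
  have hfac : ((n.factorial : ℝ≥0∞)) ≠ 0 := by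
    exact_mod_cast Nat.cast_ne_zero.2 (Nat.factorial_ne_zero n)
  have hfac' : ((n.factorial : ℝ≥0∞)) ≠ ⊤ := ENNReal.natCast_ne_top _
  calc volume (D w)
      = ((n.factorial : ℝ≥0∞))⁻¹ * ((n.factorial : ℝ≥0∞) * volume (D w)) := by
        rw [← mul_assoc, ENNReal.inv_mul_cancel hfac hfac', one_mul]
    _ = ((n.factorial : ℝ≥0∞))⁻¹ := by rw [htot, mul_one]

def Mat (n : ℕ) : Matrix (Fin n) (Fin n) ℝ := Matrix.of fun i j => if j ≤ i then 1 else 0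

lemma mat_mulVec (x : Fin n → ℝ) (i : Fin n) : (Mat n).mulVec x i = psum x i := by
  unfold Mat psum Matrix.mulVec dotProduct
  simp only [Matrix.of_apply, ite_mul, one_mul, zero_mul]
  simp only [← Finset.mem_Iic, Finset.sum_ite_mem, Finset.univ_inter]

lemma det_mat : (Mat n).det = 1 := by
  rw [Matrix.det_of_lowerTriangular (Mat n) ?_]
  · simp [Mat]
  · intro i j hij
    have hij' : i < j := hij
    simp only [Mat, Matrix.of_apply]
    rw [if_neg (not_le.2 hij')]

lemma measurable_phi (w : Equiv.Perm (Fin n)) : Measurable (phi w) := by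
  apply measurable_pi_lambda
  intro i
  apply Measurable.sub measurable_const
  unfold psum
  exact Finset.measurable_sum _ (fun j _ => measurable_pi_apply j)

lemma measurableSet_piece (w : Equiv.Perm (Fin n)) : MeasurableSet (piece w) :=
  (measurableSet_D w).preimage (measurable_phi w)

lemma volume_piece (w : Equiv.Perm (Fin n)) : volume (piece w) = volume (D w) := by
  classical
  have hmain : piece w = (Matrix.toLin' (-(Mat n))) ⁻¹'
      ((fun y => (fun i : Fin n => (mcount w i.1 : ℝ) + 1) + y) ⁻¹' D w) := by
    ext x
    simp only [piece, Set.mem_preimage]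
    have heq : (fun i : Fin n => (mcount w i.1 : ℝ) + 1) + (Matrix.toLin' (-(Mat n))) x
        = phi w x := by
      ext i
      simp only [Pi.add_apply, Matrix.toLin'_apply, Matrix.neg_mulVec, Pi.neg_apply,
        mat_mulVec, phi]
      ring
    rw [heq]
  have hdet : LinearMap.det (Matrix.toLin' (-(Mat n))) = (-1 : ℝ)^n := by
    rw [LinearMap.det_toLin', Matrix.det_neg, det_mat, Fintype.card_fin, mul_one]
  have hdet0 : LinearMap.det (Matrix.toLin' (-(Mat n))) ≠ 0 := by
    rw [hdet]
    exact pow_ne_zero _ (by norm_num)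
  rw [hmain, Measure.addHaar_preimage_linearMap volume hdet0, hdet,
    measure_preimage_add]
  have : |((-1 : ℝ)^n)⁻¹| = 1 := by
    rw [abs_inv, abs_pow, abs_neg, abs_one, one_pow, inv_one]
  rw [this, ENNReal.ofReal_one, one_mul]

lemma nat_eq_of_real_abs_lt {a b : ℕ} (h1 : (a:ℝ) - b < 1) (h2 : (b:ℝ) - a < 1) : a = b := by
  have ha : (a:ℝ) < b + 1 := by linarith
  have hb : (b:ℝ) < a + 1 := by linarith
  have ha' : a < b + 1 := by exact_mod_cast ha
  have hb' : b < a + 1 := by exact_mod_cast hb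
  omega

lemma piece_disjoint {w w' : Equiv.Perm (Fin n)} (h : w ≠ w') :
    Disjoint (piece w) (piece w') := by
  rw [Set.disjoint_left]
  intro x hx hx'
  have hIoo := (Set.mem_preimage.1 hx).1
  have hIoo' := (Set.mem_preimage.1 hx').1
  have hmeq : ∀ i : Fin n, mcount w i.1 = mcount w' i.1 := by
    intro i
    have h1 := hIoo i
    have h2 := hIoo' i
    have hdiff : phi w x i - phi w' x i = (mcount w i.1 : ℝ) - mcount w' i.1 := by
      simp only [phi]; ring
    apply nat_eq_of_real_abs_lt
    · rw [← hdiff]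
      have := h1.2; have := h2.1
      simp only [Set.mem_Ioo] at h1 h2
      linarith [h1.2, h2.1]
    · rw [show (mcount w' i.1 : ℝ) - mcount w i.1 = -(phi w x i - phi w' x i) from by
        rw [hdiff]; ring]
      simp only [Set.mem_Ioo] at h1 h2
      linarith [h1.1, h2.2]
  have hphi : phi w x = phi w' x := by
    funext i
    simp only [phi, hmeq i]
  exact (Set.disjoint_left.1 (D_disjoint h)) hx (by rw [hphi]; exact hx')

lemma psum_top (hn : 0 < n) (x : Fin n → ℝ) :
    psum x ⟨n-1, by omega⟩ = ∑ i, x i := by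
  unfold psum
  rw [show Finset.Iic (⟨n-1, by omega⟩ : Fin n) = Finset.univ from ?_]
  ext a
  simp only [Finset.mem_Iic, Finset.mem_univ, iff_true, Fin.le_def]
  have := a.2
  omega

lemma piece_subset (hn : 0 < n) {w : Equiv.Perm (Fin n)} {k : ℕ} (hw : (ascSet w).card = k) :
    piece w ⊆ {x : Fin n → ℝ |
      x ∈ Set.Icc 0 1 ∧ (k : ℝ) ≤ ∑ i, x i ∧ ∑ i, x i ≤ (k : ℝ) + 1} := by
  intro x hx
  have hIoo := (Set.mem_preimage.1 hx).1
  have hpat := (Set.mem_preimage.1 hx).2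
  have hcoord : ∀ i : Fin n, x i ∈ Set.Ioo (0:ℝ) 1 := by
    rintro ⟨m, hm⟩
    match m with
    | 0 =>
      have h0 := hIoo ⟨0, hm⟩
      simp only [phi, psum_zero hm, mcount_zero, Nat.cast_zero, Set.mem_Ioo] at h0 ⊢
      constructor
      · linarith [h0.2]
      · linarith [h0.1]
    | m + 1 =>
      have hm' : m < n := by omega
      have hp := hIoo ⟨m, hm'⟩
      have hc := hIoo ⟨m+1, hm⟩
      have hx1 : x ⟨m+1, hm⟩ = psum x ⟨m+1, hm⟩ - psum x ⟨m, hm'⟩ := by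
        rw [psum_succ x m hm]; ring
      have hphip : psum x ⟨m, hm'⟩ = (mcount w m : ℝ) + 1 - phi w x ⟨m, hm'⟩ := by
        simp only [phi]; ring
      have hphic : psum x ⟨m+1, hm⟩ = (mcount w (m+1) : ℝ) + 1 - phi w x ⟨m+1, hm⟩ := by
        simp only [phi]; ring
      rw [Set.mem_Ioo] at hp hc
      by_cases hasc : (⟨m, hm'⟩ : Fin n) ∈ ascSet w
      · have hlt : w ⟨m, hm'⟩ < w ⟨m+1, hm⟩ := (mem_ascSet_iff (j := ⟨m+1, hm⟩) rfl).1 hasc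
        have hzlt : phi w x ⟨m, hm'⟩ < phi w x ⟨m+1, hm⟩ := hpat _ _ hlt
        have hmc : (mcount w (m+1) : ℝ) = mcount w m + 1 := by
          rw [mcount_succ w m hm', if_pos hasc]; push_cast; ring
        rw [Set.mem_Ioo, hx1, hphip, hphic, hmc]
        constructor <;> linarith [hp.1, hp.2, hc.1, hc.2]
      · have hne : w ⟨m, hm'⟩ ≠ w ⟨m+1, hm⟩ :=
          fun hq => by simpa using w.injective hq
        have hlt : w ⟨m+1, hm⟩ < w ⟨m, hm'⟩ := by
          rcases lt_or_gt_of_ne hne with h1 | h1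
          · exact absurd ((mem_ascSet_iff (j := ⟨m+1, hm⟩) rfl).2 h1) hasc
          · exact h1
        have hzlt : phi w x ⟨m+1, hm⟩ < phi w x ⟨m, hm'⟩ := hpat _ _ hlt
        have hmc : (mcount w (m+1) : ℝ) = mcount w m := by
          rw [mcount_succ w m hm', if_neg hasc]; push_cast; ring
        rw [Set.mem_Ioo, hx1, hphip, hphic, hmc]
        constructor <;> linarith [hp.1, hp.2, hc.1, hc.2]
  refine ⟨⟨fun i => le_of_lt (hcoord i).1, fun i => le_of_lt (hcoord i).2⟩, ?_, ?_⟩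
  · have htop := hIoo ⟨n-1, by omega⟩
    have : psum x ⟨n-1, by omega⟩ = (mcount w (n-1) : ℝ) + 1 - phi w x ⟨n-1, by omega⟩ := by
      simp only [phi]; ring
    rw [← psum_top hn x, this, mcount_last, hw]
    rw [Set.mem_Ioo] at htop
    linarith [htop.2]
  · have htop := hIoo ⟨n-1, by omega⟩
    have : psum x ⟨n-1, by omega⟩ = (mcount w (n-1) : ℝ) + 1 - phi w x ⟨n-1, by omega⟩ := by
      simp only [phi]; ring
    rw [← psum_top hn x, this, mcount_last, hw]
    rw [Set.mem_Ioo] at htop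
    linarith [htop.1]

noncomputable def psumL (i : Fin n) : (Fin n → ℝ) →ₗ[ℝ] ℝ :=
  ∑ j ∈ Finset.Iic i, LinearMap.proj j

lemma psumL_apply (i : Fin n) (x : Fin n → ℝ) : psumL i x = psum x i := by
  simp [psumL, psum, LinearMap.sum_apply]

lemma level_null (i : Fin n) (q : ℝ) : volume {x : Fin n → ℝ | psum x i = q} = 0 := by
  classical
  have h : psumL i (Pi.single i (1:ℝ)) = 1 := by
    rw [psumL_apply, psum]
    rw [Finset.sum_eq_single i (fun j _ hj => Pi.single_eq_of_ne hj 1)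
      (fun h => absurd (Finset.mem_Iic.2 le_rfl) h)]
    exact Pi.single_eq_same i 1
  have := hyperplane_null (psumL i) (Pi.single i 1) (by rw [h]; norm_num) q
  convert this using 2
  ext x
  simp [psumL_apply]

lemma diff_null {i j : Fin n} (hij : i ≠ j) (q : ℝ) :
    volume {x : Fin n → ℝ | psum x i - psum x j = q} = 0 := by
  classical
  set f : (Fin n → ℝ) →ₗ[ℝ] ℝ := psumL i - psumL j with hf
  have happ : ∀ x, f x = psum x i - psum x j := by
    intro x; simp [hf, psumL_apply]
  have key : ∃ v, f v ≠ 0 := by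
    rcases lt_or_gt_of_ne hij with h1 | h1
    · refine ⟨Pi.single j 1, ?_⟩
      rw [happ]
      have hji : psum (Pi.single j (1:ℝ)) j = 1 := by
        rw [psum, Finset.sum_eq_single j (fun a _ ha => Pi.single_eq_of_ne ha 1)
          (fun h => absurd (Finset.mem_Iic.2 le_rfl) h)]
        exact Pi.single_eq_same j 1
      have hii : psum (Pi.single j (1:ℝ)) i = 0 := by
        rw [psum]
        apply Finset.sum_eq_zero
        intro a ha
        apply Pi.single_eq_of_ne
        intro hc
        subst hc
        exact absurd (Finset.mem_Iic.1 ha) (not_le.2 h1)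
      rw [hji, hii]; norm_num
    · refine ⟨Pi.single i 1, ?_⟩
      rw [happ]
      have hii : psum (Pi.single i (1:ℝ)) i = 1 := by
        rw [psum, Finset.sum_eq_single i (fun a _ ha => Pi.single_eq_of_ne ha 1)
          (fun h => absurd (Finset.mem_Iic.2 le_rfl) h)]
        exact Pi.single_eq_same i 1
      have hji : psum (Pi.single i (1:ℝ)) j = 0 := by
        rw [psum]
        apply Finset.sum_eq_zero
        intro a ha
        apply Pi.single_eq_of_ne
        intro hc
        subst hc
        exact absurd (Finset.mem_Iic.1 ha) (not_le.2 h1)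
      rw [hii, hji]; norm_num
  obtain ⟨v, hv⟩ := key
  have := hyperplane_null f v hv q
  convert this using 2
  ext x
  simp [happ]

lemma slab_cover (hn : 0 < n) (k : ℕ) (x : Fin n → ℝ)
    (hx : x ∈ Set.Icc (0 : Fin n → ℝ) 1)
    (hsum1 : (k:ℝ) ≤ ∑ i, x i) (hsum2 : ∑ i, x i ≤ (k:ℝ)+1)
    (hg1 : ∀ (i : Fin n) (q : ℤ), psum x i ≠ q)
    (hg2 : ∀ (i j : Fin n), i ≠ j → ∀ q : ℤ, psum x i - psum x j ≠ q) :
    ∃ w : Equiv.Perm (Fin n), (ascSet w).card = k ∧ x ∈ piece w := by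
  classical
  set z : Fin n → ℝ := fun i => (⌊psum x i⌋ : ℝ) + 1 - psum x i with hz
  have hz01 : ∀ i, z i ∈ Set.Ioo (0:ℝ) 1 := by
    intro i
    constructor
    · have := Int.lt_floor_add_one (psum x i)
      simp only [hz]; linarith
    · have h1 := Int.floor_le (psum x i)
      have h2 : (⌊psum x i⌋ : ℝ) ≠ psum x i := fun hc => hg1 i ⌊psum x i⌋ hc.symm
      simp only [hz]
      cases lt_or_eq_of_le h1 with
      | inl h => linarith
      | inr h => exact absurd h h2
  have hzinj : Function.Injective z := by
    intro i j hijz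
    by_contra hne
    apply hg2 i j hne (⌊psum x i⌋ - ⌊psum x j⌋)
    simp only [hz] at hijz
    push_cast
    linarith
  set σ := Tuple.sort z with hσ
  have hmono : StrictMono (z ∘ σ) :=
    (Tuple.monotone_sort z).strictMono_of_injective (hzinj.comp σ.injective)
  set w : Equiv.Perm (Fin n) := σ⁻¹ with hw
  have hpat : ∀ i j, w i < w j → z i < z j := by
    intro i j hij
    have := hmono hij
    simpa [hw] using this
  have hasc : ∀ (m : ℕ) (hm : m + 1 < n),
      ((⟨m, by omega⟩ : Fin n) ∈ ascSet w ↔ z ⟨m, by omega⟩ < z ⟨m+1, hm⟩) := by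
    intro m hm
    constructor
    · intro h
      exact hpat _ _ ((mem_ascSet_iff (j := ⟨m+1, hm⟩) rfl).1 h)
    · intro h
      have hne : w ⟨m, by omega⟩ ≠ w ⟨m+1, hm⟩ :=
        fun hq => by simpa using w.injective hq
      rcases lt_or_gt_of_ne hne with h1 | h1
      · exact (mem_ascSet_iff (j := ⟨m+1, hm⟩) rfl).2 h1
      · exact absurd (hpat _ _ h1) (not_lt.2 (le_of_lt h))
  have hxIoo : ∀ i : Fin n, x i ∈ Set.Ioo (0:ℝ) 1 := by
    rintro ⟨m, hm⟩
    match m with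
    | 0 =>
      have h1 : psum x ⟨0, hm⟩ = x ⟨0, hm⟩ := psum_zero hm x
      have h2 := hg1 ⟨0, hm⟩ 0
      have h3 := hg1 ⟨0, hm⟩ 1
      rw [h1] at h2 h3
      have := hx.1 ⟨0, hm⟩
      have := hx.2 ⟨0, hm⟩
      simp only [Pi.zero_apply, Pi.one_apply] at *
      constructor
      · cases lt_or_eq_of_le (hx.1 ⟨0, hm⟩) with
        | inl h => exact h
        | inr h => exact absurd h.symm (by exact_mod_cast h2)
      · cases lt_or_eq_of_le (hx.2 ⟨0, hm⟩) with
        | inl h => exact h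
        | inr h => exact absurd h (by exact_mod_cast h3)
    | m + 1 =>
      have hm' : m < n := by omega
      have hxeq : x ⟨m+1, hm⟩ = psum x ⟨m+1, hm⟩ - psum x ⟨m, hm'⟩ := by
        rw [psum_succ x m hm]; ring
      have h2 := hg2 ⟨m+1, hm⟩ ⟨m, hm'⟩ (by simp [Fin.ext_iff]) 0
      have h3 := hg2 ⟨m+1, hm⟩ ⟨m, hm'⟩ (by simp [Fin.ext_iff]) 1
      have hle1 := hx.1 ⟨m+1, hm⟩
      have hle2 := hx.2 ⟨m+1, hm⟩
      simp only [Pi.zero_apply, Pi.one_apply] at hle1 hle2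
      constructor
      · cases lt_or_eq_of_le hle1 with
        | inl h => exact h
        | inr h =>
          exfalso
          apply h2
          rw [← hxeq, ← h]
          norm_num
      · cases lt_or_eq_of_le hle2 with
        | inl h => exact h
        | inr h =>
          exfalso
          apply h3
          rw [← hxeq, h]
          norm_num
  have hfloor : ∀ (m : ℕ) (hm : m < n), (mcount w m : ℤ) = ⌊psum x ⟨m, hm⟩⌋ := by
    intro m
    induction m with
    | zero =>
      intro hm
      rw [mcount_zero, psum_zero hm, Nat.cast_zero]
      symm
      rw [Int.floor_eq_zero_iff]
      have := hxIoo ⟨0, hm⟩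
      exact ⟨le_of_lt this.1, this.2⟩
    | succ m ih =>
      intro hm
      have hm' : m < n := by omega
      have hxm := hxIoo ⟨m+1, hm⟩
      have hps := psum_succ x m hm
      -- floor is one of two values
      have htwo : ⌊psum x ⟨m+1, hm⟩⌋ = ⌊psum x ⟨m, hm'⟩⌋ ∨
          ⌊psum x ⟨m+1, hm⟩⌋ = ⌊psum x ⟨m, hm'⟩⌋ + 1 := by
        have hlow : ⌊psum x ⟨m, hm'⟩⌋ ≤ ⌊psum x ⟨m+1, hm⟩⌋ := by
          apply Int.floor_le_floor
          rw [hps]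
          linarith [hxm.1]
        have hhigh : ⌊psum x ⟨m+1, hm⟩⌋ < ⌊psum x ⟨m, hm'⟩⌋ + 2 := by
          rw [Int.floor_lt]
          push_cast
          rw [hps]
          have := Int.lt_floor_add_one (psum x ⟨m, hm'⟩)
          linarith [hxm.2]
        omega
      have hzdiff : z ⟨m+1, hm⟩ - z ⟨m, hm'⟩ =
          ((⌊psum x ⟨m+1, hm⟩⌋ : ℝ) - ⌊psum x ⟨m, hm'⟩⌋) - x ⟨m+1, hm⟩ := by
        simp only [hz]
        rw [hps]
        ring
      rw [mcount_succ w m hm']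
      by_cases hma : (⟨m, hm'⟩ : Fin n) ∈ ascSet w
      · rw [if_pos hma]
        have hzlt : z ⟨m, hm'⟩ < z ⟨m+1, hm⟩ := (hasc m hm).1 hma
        cases htwo with
        | inl h =>
          exfalso
          rw [h] at hzdiff
          simp only [sub_self, zero_sub] at hzdiff
          linarith [hxm.1]
        | inr h =>
          rw [h, ← ih hm']
          push_cast
          ring
      · rw [if_neg hma]
        have hzge : ¬ (z ⟨m, hm'⟩ < z ⟨m+1, hm⟩) := fun hc => hma ((hasc m hm).2 hc)
        cases htwo with
        | inl h =>
          rw [h]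
          simpa using ih hm'
        | inr h =>
          exfalso
          rw [h] at hzdiff
          push_cast at hzdiff
          apply hzge
          have : z ⟨m+1, hm⟩ - z ⟨m, hm'⟩ = 1 - x ⟨m+1, hm⟩ := by
            rw [hzdiff]; ring
          have hpos : (0:ℝ) < 1 - x ⟨m+1, hm⟩ := by linarith [hxm.2]
          linarith [this ▸ hpos]
  refine ⟨w, ?_, ?_⟩
  · -- ascent count is k
    have h1 : (mcount w (n-1) : ℤ) = ⌊psum x ⟨n-1, by omega⟩⌋ := hfloor (n-1) (by omega)
    have h2 : ⌊psum x ⟨n-1, by omega⟩⌋ = (k : ℤ) := by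
      rw [psum_top hn x]
      rw [Int.floor_eq_iff]
      refine ⟨by exact_mod_cast hsum1, ?_⟩
      have hne : ∑ i, x i ≠ ((k:ℤ) + 1 : ℤ) := by
        rw [← psum_top hn x]
        exact hg1 _ _
      push_cast at hne ⊢
      cases lt_or_eq_of_le hsum2 with
      | inl h => exact h
      | inr h => exact absurd h hne
    rw [← mcount_last w]
    exact_mod_cast h1.trans h2
  · -- x lies in piece w
    have hphiz : phi w x = z := by
      funext i
      have := hfloor i.1 i.2
      simp only [phi, hz]
      have hcast : (mcount w i.1 : ℝ) = (⌊psum x i⌋ : ℝ) := by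
        exact_mod_cast this
      rw [hcast]
    have : phi w x ∈ D w := by rw [hphiz]; exact ⟨hz01, hpat⟩
    exact this

end EulerSlab

open EulerSlab in
/-- Laplace's result: the volume of the slab `Ξₖⁿ` of the unit hypercube between the
hyperplanes `∑ xᵢ = k` and `∑ xᵢ = k + 1` equals the Eulerian number `A(n,k)` divided
by `n!`. -/
theorem volume_eulerian_slab
    (n : ℕ) (hn : 0 < n) (k : ℕ) (hk : k ≤ n - 1) :
    (volume {x : Fin n → ℝ |
        x ∈ Set.Icc 0 1 ∧ (k : ℝ) ≤ ∑ i, x i ∧ ∑ i, x i ≤ (k : ℝ) + 1}).toReal =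
      (eulerianNumber n k : ℝ) / (n.factorial : ℝ) := by
  set S := {x : Fin n → ℝ |
      x ∈ Set.Icc 0 1 ∧ (k : ℝ) ≤ ∑ i, x i ∧ ∑ i, x i ≤ (k : ℝ) + 1} with hS
  set F : Finset (Equiv.Perm (Fin n)) :=
    Finset.univ.filter (fun w => (ascSet w).card = k) with hF
  set N : Set (Fin n → ℝ) :=
      (⋃ (i : Fin n), ⋃ (q : ℤ), {x : Fin n → ℝ | psum x i = q}) ∪
       ⋃ (p : Fin n × Fin n), ⋃ (_ : p.1 ≠ p.2), ⋃ (q : ℤ),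
         {x : Fin n → ℝ | psum x p.1 - psum x p.2 = q} with hN
  have hsubset : (⋃ w ∈ F, piece w) ⊆ S := by
    intro x hx
    simp only [Set.mem_iUnion] at hx
    obtain ⟨w, hwF, hxw⟩ := hx
    have hcard : (ascSet w).card = k := by
      simpa [hF] using hwF
    exact piece_subset hn hcard hxw
  have hcover : S ⊆ (⋃ w ∈ F, piece w) ∪ N := by
    intro x hx
    obtain ⟨hxI, hs1, hs2⟩ := hx
    by_cases hg1 : ∀ (i : Fin n) (q : ℤ), psum x i ≠ q
    · by_cases hg2 : ∀ (i j : Fin n), i ≠ j → ∀ q : ℤ, psum x i - psum x j ≠ q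
      · left
        obtain ⟨w, hwcard, hxw⟩ := slab_cover hn k x hxI hs1 hs2 hg1 hg2
        have hmem : w ∈ F := by
          rw [hF, Finset.mem_filter]
          exact ⟨Finset.mem_univ w, hwcard⟩
        exact Set.mem_iUnion₂.2 ⟨w, hmem, hxw⟩
      · right
        rw [hN]
        right
        push_neg at hg2
        obtain ⟨i, j, hij, q, hq⟩ := hg2
        exact Set.mem_iUnion.2 ⟨(i,j), Set.mem_iUnion.2 ⟨hij, Set.mem_iUnion.2 ⟨q, hq⟩⟩⟩
    · right
      rw [hN]
      left
      push_neg at hg1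
      obtain ⟨i, q, hq⟩ := hg1
      exact Set.mem_iUnion.2 ⟨i, Set.mem_iUnion.2 ⟨q, hq⟩⟩
  have hnull : volume N = 0 := by
    rw [hN]
    apply measure_union_null
    · exact measure_iUnion_null fun i => measure_iUnion_null fun q => level_null i q
    · exact measure_iUnion_null fun p =>
        measure_iUnion_null fun hp => measure_iUnion_null fun q => diff_null hp q
  have hvolU : volume (⋃ w ∈ F, piece w) = (F.card : ℝ≥0∞) * ((n.factorial : ℝ≥0∞))⁻¹ := by
    rw [measure_biUnion_finset (fun a _ b _ hab => piece_disjoint hab)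
      (fun w _ => measurableSet_piece w)]
    rw [Finset.sum_congr rfl (fun w _ => (volume_piece w).trans (volume_D_val hn w))]
    rw [Finset.sum_const, nsmul_eq_mul]
  have hvolS : volume S = (F.card : ℝ≥0∞) * ((n.factorial : ℝ≥0∞))⁻¹ := by
    apply le_antisymm
    · calc volume S ≤ volume ((⋃ w ∈ F, piece w) ∪ N) := measure_mono hcover
        _ ≤ volume (⋃ w ∈ F, piece w) + volume N := measure_union_le _ _
        _ = volume (⋃ w ∈ F, piece w) := by rw [hnull, add_zero]
        _ = (F.card : ℝ≥0∞) * ((n.factorial : ℝ≥0∞))⁻¹ := hvolU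
    · rw [← hvolU]
      exact measure_mono hsubset
  have hcardF : F.card = eulerianNumber n k := by
    rw [eulerianNumber, hF]
    congr 1
  rw [hvolS, hcardF, ENNReal.toReal_mul, ENNReal.toReal_inv]
  simp [div_eq_mul_inv]
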